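/- Let φ be a differentiable convex function on a bounded open convex set Ω ⊆ ℝⁿ, and suppose S_φ(x₀,h) and S_φ(x₀,2h) are sections with closure of S_φ(x₀,2h) in Ω, and that d := dist(S_φ(x₀,h), ∂S_φ(x₀,2h)) > 0. Then the gradient of φ is bounded on S_φ(x₀,h) by sup_{S_φ(x₀,h)} |∇φ − ∇φ(x₀)| ≤ h/d. -/

import Mathlib

open Metric

private lemma subgrad_aux {E : Type*} [NormedAddCommGroup E] [NormedSpace ℝ E] {Ω : Set E}
    (hΩo : IsOpen Ω) {φ : E → ℝ} (hconv : ConvexOn ℝ Ω φ)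
    (hdiff : DifferentiableOn ℝ φ Ω) {a b : E} (ha : a ∈ Ω) (hb : b ∈ Ω) :
    φ a + fderiv ℝ φ a (b - a) ≤ φ b := by
  have hda : DifferentiableAt ℝ φ a := hdiff.differentiableAt (hΩo.mem_nhds ha)
  have hfd : HasFDerivAt φ (fderiv ℝ φ a) (a + (0:ℝ) • (b - a)) := by
    simpa using hda.hasFDerivAt
  have hk : HasDerivAt (fun t : ℝ => φ (a + t • (b - a))) (fderiv ℝ φ a (b - a)) 0 := by
    have h1 : HasDerivAt (fun t : ℝ => a + t • (b - a)) (b - a) 0 := by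
      simpa using ((hasDerivAt_id (0:ℝ)).smul_const (b - a)).const_add a
    exact hfd.comp_hasDerivAt 0 h1
  have hslope := hasDerivAt_iff_tendsto_slope.1 hk
  have hslope' : Filter.Tendsto (slope (fun t : ℝ => φ (a + t • (b - a))) 0)
      (nhdsWithin 0 (Set.Ioi 0)) (nhds (fderiv ℝ φ a (b - a))) :=
    hslope.mono_left (nhdsWithin_mono _ (fun t ht => ne_of_gt ht))
  have hev : ∀ᶠ t in nhdsWithin (0:ℝ) (Set.Ioi 0),
      slope (fun t : ℝ => φ (a + t • (b - a))) 0 t ≤ φ b - φ a := by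
    filter_upwards [Ioo_mem_nhdsGT_of_mem (by norm_num : (0:ℝ) ∈ Set.Ico 0 1)] with t ht
    have hconvineq := hconv.2 ha hb (by linarith [ht.1, ht.2] : (0:ℝ) ≤ 1 - t)
      (le_of_lt ht.1) (by ring)
    have heq : a + t • (b - a) = (1 - t) • a + t • b := by
      rw [smul_sub, sub_smul, one_smul]; abel
    rw [slope_def_field]
    simp only [zero_smul, add_zero, sub_zero]
    rw [div_le_iff₀ ht.1, heq]
    simp only [smul_eq_mul] at hconvineq
    calc φ ((1-t) • a + t • b) - φ a ≤ ((1-t) * φ a + t * φ b) - φ a := by linarith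
      _ = (φ b - φ a) * t := by ring
  have := le_of_tendsto hslope' hev
  linarith

private lemma arith_aux (p q c dd : ℝ) (hp : 0 < p) (hdd : 0 < dd) (hc : dd ≤ c)
    (H : c * q ≤ p) : q ≤ p / dd := by
  rcases le_or_gt q 0 with hq | hq
  · exact hq.trans (by positivity)
  · have hcpos : 0 < c := lt_of_lt_of_le hdd hc
    have h1 : q ≤ p / c := (le_div_iff₀ hcpos).2 (by nlinarith)
    refine h1.trans ?_
    gcongr

set_option maxHeartbeats 1000000 in
/-- Gradient bound on sections: if `d = dist(S_φ(x₀,h), ∂S_φ(x₀,2h)) > 0`, then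
`|∇φ - ∇φ(x₀)| ≤ h/d` on `S_φ(x₀,h)`. -/
theorem gradient_bound_on_section
    (n : ℕ) (Ω : Set (EuclideanSpace ℝ (Fin n)))
    (hΩo : IsOpen Ω) (hΩc : Convex ℝ Ω) (hΩb : Bornology.IsBounded Ω)
    (φ : EuclideanSpace ℝ (Fin n) → ℝ)
    (hconv : ConvexOn ℝ Ω φ) (hdiff : DifferentiableOn ℝ φ Ω)
    (x₀ : EuclideanSpace ℝ (Fin n)) (hx₀ : x₀ ∈ Ω)
    (h d : ℝ) (hh : 0 < h) (hd : 0 < d)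
    (S₁ S₂ : Set (EuclideanSpace ℝ (Fin n)))
    (hS₁ : S₁ = {y ∈ Ω | φ y < φ x₀ + fderiv ℝ φ x₀ (y - x₀) + h})
    (hS₂ : S₂ = {y ∈ Ω | φ y < φ x₀ + fderiv ℝ φ x₀ (y - x₀) + 2 * h})
    (hcl : closure S₂ ⊆ Ω)
    (hdist : ∀ x ∈ S₁, ∀ y ∈ frontier S₂, d ≤ dist x y) :
    ∀ x ∈ S₁, ‖fderiv ℝ φ x - fderiv ℝ φ x₀‖ ≤ h / d := by
  intro x hx
  set ℓ : EuclideanSpace ℝ (Fin n) → ℝ := fun y => φ y - φ x₀ - fderiv ℝ φ x₀ (y - x₀) with hℓdef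
  -- basic facts about ℓ and the sections
  have hmem₁ : ∀ y, y ∈ S₁ ↔ y ∈ Ω ∧ ℓ y < h := by
    intro y; rw [hS₁]; simp only [Set.mem_setOf_eq, hℓdef]
    constructor <;> rintro ⟨h1, h2⟩ <;> exact ⟨h1, by linarith⟩
  have hmem₂ : ∀ y, y ∈ S₂ ↔ y ∈ Ω ∧ ℓ y < 2 * h := by
    intro y; rw [hS₂]; simp only [Set.mem_setOf_eq, hℓdef]
    constructor <;> rintro ⟨h1, h2⟩ <;> exact ⟨h1, by linarith⟩
  have hS₂Ω : S₂ ⊆ Ω := fun y hy => ((hmem₂ y).1 hy).1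
  have hℓcont : ContinuousOn ℓ Ω := by
    apply (hdiff.continuousOn.sub continuousOn_const).sub
    exact ((fderiv ℝ φ x₀).continuous.comp (continuous_id.sub continuous_const)).continuousOn
  have hℓconv : ConvexOn ℝ Ω ℓ := by
    refine ⟨hΩc, fun y₁ h₁ y₂ h₂ a b ha hb hab => ?_⟩
    have hid : a • y₁ + b • y₂ - x₀ = a • (y₁ - x₀) + b • (y₂ - x₀) := by
      match_scalars <;> (first | ring1 | linear_combination hab)
    have hφ := hconv.2 h₁ h₂ ha hb hab
    simp only [hℓdef, smul_eq_mul] at *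
    rw [hid, map_add, map_smul, map_smul]
    simp only [smul_eq_mul]
    have hx0 : a * φ x₀ + b * φ x₀ = φ x₀ := by rw [← add_mul, hab, one_mul]
    linarith
  have hS₂open : IsOpen S₂ := by
    have : S₂ = Ω ∩ ℓ ⁻¹' (Set.Iio (2 * h)) := by
      ext y; rw [hmem₂ y]; simp [Set.mem_preimage]
    rw [this]
    exact hℓcont.isOpen_inter_preimage hΩo isOpen_Iio
  have hS₂conv : Convex ℝ S₂ := by
    have : S₂ = {y ∈ Ω | ℓ y < 2 * h} := Set.ext fun y => (hmem₂ y).trans (by simp)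
    rw [this]; exact hℓconv.convex_lt (2 * h)
  have hxΩ : x ∈ Ω := ((hmem₁ x).1 hx).1
  have hxS₂ : x ∈ S₂ := (hmem₂ x).2 ⟨hxΩ, by linarith [((hmem₁ x).1 hx).2]⟩
  -- key directional estimate
  have key : ∀ u : EuclideanSpace ℝ (Fin n), ‖u‖ = 1 → ∀ ε : ℝ, 0 < ε →
      fderiv ℝ φ x u - fderiv ℝ φ x₀ u ≤ (h + ε) / d := by
    intro u hu ε hε
    set A : Set ℝ := {t : ℝ | 0 ≤ t ∧ x + t • u ∈ S₂} with hAdef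
    have hA0 : (0:ℝ) ∈ A := ⟨le_refl 0, by simpa using hxS₂⟩
    obtain ⟨R, hR⟩ := hΩb.subset_ball x
    have hAbdd : BddAbove A := by
      refine ⟨R, fun t ht => ?_⟩
      have := hR (hS₂Ω ht.2)
      rw [mem_ball, dist_eq_norm, add_sub_cancel_left, norm_smul, hu, mul_one,
        Real.norm_eq_abs] at this
      linarith [le_abs_self t]
    set T := sSup A with hTdef
    have hT0 : 0 ≤ T := le_csSup hAbdd hA0
    have hTpos : 0 < T := by
      obtain ⟨r, hr, hball⟩ := isOpen_iff.1 hS₂open x hxS₂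
      have : r / 2 ∈ A := by
        refine ⟨by linarith, hball ?_⟩
        rw [mem_ball, dist_eq_norm, add_sub_cancel_left, norm_smul, hu, mul_one,
          Real.norm_eq_abs, abs_of_pos (by linarith)]
        linarith
      linarith [le_csSup hAbdd this]
    have hmemlt : ∀ t : ℝ, 0 ≤ t → t < T → x + t • u ∈ S₂ := by
      intro t ht0 htT
      obtain ⟨t', ht'A, htt'⟩ := exists_lt_of_lt_csSup ⟨0, hA0⟩ htT
      have ht'pos : 0 < t' := lt_of_le_of_lt ht0 htt'
      set c := t / t' with hcdef
      have hc0 : 0 ≤ c := div_nonneg ht0 ht'pos.le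
      have hc1 : c ≤ 1 := (div_le_one ht'pos).2 htt'.le
      have := hS₂conv hxS₂ ht'A.2 (by linarith : (0:ℝ) ≤ 1 - c) hc0 (by ring)
      have heq : (1 - c) • x + c • (x + t' • u) = x + t • u := by
        have hct : c * t' = t := div_mul_cancel₀ t ht'pos.ne'
        rw [smul_add, smul_smul, hct, sub_smul, one_smul]
        abel
      rwa [heq] at this
    set z := x + T • u with hzdef
    have hzcl : z ∈ closure S₂ := by
      have hne : (nhdsWithin T (Set.Ico 0 T)).NeBot := by
        apply mem_closure_iff_nhdsWithin_neBot.mp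
        rw [closure_Ico hTpos.ne]
        exact ⟨hT0, le_refl T⟩
      have htends : Filter.Tendsto (fun t : ℝ => x + t • u)
          (nhdsWithin T (Set.Ico 0 T)) (nhds z) := by
        apply Filter.Tendsto.mono_left _ nhdsWithin_le_nhds
        exact (continuous_const.add (continuous_id.smul continuous_const)).tendsto T
      exact mem_closure_of_tendsto htends
        (eventually_mem_nhdsWithin.mono fun t ht => hmemlt t ht.1 ht.2)
    have hzΩ : z ∈ Ω := hcl hzcl
    have hznS₂ : z ∉ S₂ := by
      intro hzin
      obtain ⟨r, hr, hball⟩ := isOpen_iff.1 hS₂open z hzin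
      have : T + r / 2 ∈ A := by
        refine ⟨by linarith, hball ?_⟩
        rw [mem_ball, dist_eq_norm, hzdef]
        have : x + (T + r / 2) • u - (x + T • u) = (r / 2) • u := by
          rw [add_smul]; abel
        rw [this, norm_smul, hu, mul_one, Real.norm_eq_abs, abs_of_pos (by linarith)]
        linarith
      linarith [le_csSup hAbdd this]
    have hzfr : z ∈ frontier S₂ := by
      rw [hS₂open.frontier_eq]; exact ⟨hzcl, hznS₂⟩
    have hdT : d ≤ T := by
      have := hdist x hx z hzfr
      rwa [dist_eq_norm, hzdef, show x - (x + T • u) = (-T) • u by rw [neg_smul]; abel,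
        norm_smul, hu, mul_one, Real.norm_eq_abs, abs_neg, abs_of_nonneg hT0] at this
    -- the function g along the ray
    set g : ℝ → ℝ := fun t => ℓ (x + t • u) with hgdef
    have hmaps : Set.MapsTo (fun t : ℝ => x + t • u) (Set.Icc 0 T) Ω := by
      intro t ht
      rcases lt_or_eq_of_le ht.2 with hlt | heq
      · exact hS₂Ω (hmemlt t ht.1 hlt)
      · rw [heq]; exact hzΩ
    have hgc : ContinuousOn g (Set.Icc 0 T) :=
      hℓcont.comp (continuous_const.add (continuous_id.smul continuous_const)).continuousOn hmaps
    have hg0 : g 0 = ℓ x := by simp [hgdef]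
    have hg0h : g 0 < h := by rw [hg0]; exact ((hmem₁ x).1 hx).2
    have hgT : g T = ℓ z := rfl
    have hgT2 : 2 * h ≤ g T := by
      by_contra hcon
      exact hznS₂ ((hmem₂ z).2 ⟨hzΩ, by push_neg at hcon; exact hcon⟩)
    have hgTle : g T ≤ 2 * h := by
      have hne : (nhdsWithin T (Set.Ico 0 T)).NeBot := by
        apply mem_closure_iff_nhdsWithin_neBot.mp
        rw [closure_Ico hTpos.ne]
        exact ⟨hT0, le_refl T⟩
      have htends : Filter.Tendsto g (nhdsWithin T (Set.Ico 0 T)) (nhds (g T)) :=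
        (hgc.continuousWithinAt ⟨hT0, le_refl T⟩).mono_left
          (nhdsWithin_mono _ Set.Ico_subset_Icc_self)
      refine le_of_tendsto htends (eventually_mem_nhdsWithin.mono fun t ht => ?_)
      exact le_of_lt ((hmem₂ _).1 (hmemlt t ht.1 ht.2)).2
    -- intermediate value
    set m := max (g 0) (h - ε) with hmdef
    have hmh : m < h := max_lt hg0h (by linarith)
    have hmmem : m ∈ Set.Icc (g 0) (g T) := ⟨le_max_left _ _, by linarith⟩
    obtain ⟨t₁, ht₁mem, hgt₁⟩ := intermediate_value_Icc hT0 hgc hmmem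
    have ht₁T : t₁ < T := by
      rcases lt_or_eq_of_le ht₁mem.2 with hlt | heq
      · exact hlt
      · exfalso; rw [heq] at hgt₁; linarith
    set w := x + t₁ • u with hwdef
    have hwS₂ : w ∈ S₂ := hmemlt t₁ ht₁mem.1 ht₁T
    have hwΩ : w ∈ Ω := hS₂Ω hwS₂
    have hwS₁ : w ∈ S₁ := (hmem₁ w).2 ⟨hwΩ, by rw [show ℓ w = m from hgt₁]; exact hmh⟩
    have hdw : d ≤ T - t₁ := by
      have := hdist w hwS₁ z hzfr
      rwa [dist_eq_norm, hzdef, hwdef,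
        show x + t₁ • u - (x + T • u) = (t₁ - T) • u by rw [sub_smul]; abel,
        norm_smul, hu, mul_one, Real.norm_eq_abs, abs_of_nonpos (by linarith),
        neg_sub] at this
    -- subgradient inequalities
    have hzw : z - w = (T - t₁) • u := by rw [hzdef, hwdef, sub_smul]; abel
    have hwx : w - x = t₁ • u := by rw [hwdef]; abel
    have hxw : x - w = (-t₁) • u := by rw [hwdef, neg_smul]; abel
    have hsub1 := subgrad_aux hΩo hconv hdiff hwΩ hzΩ
    rw [hzw, map_smul, smul_eq_mul] at hsub1
    -- ℓ z - ℓ w bound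
    have hℓzw : ℓ z - ℓ w = φ z - φ w - (T - t₁) * fderiv ℝ φ x₀ u := by
      simp only [hℓdef]
      rw [show z - x₀ = (w - x₀) + (T - t₁) • u by rw [← hzw]; abel, map_add, map_smul,
        smul_eq_mul]
      ring
    have hℓwval : ℓ w = m := hgt₁
    have hℓzle : ℓ z ≤ 2 * h := by rw [← hgT]; exact hgTle
    have hstep : (T - t₁) * (fderiv ℝ φ w u - fderiv ℝ φ x₀ u) ≤ h + ε := by
      have h1 : (T - t₁) * fderiv ℝ φ w u ≤ φ z - φ w := by linarith
      have h2 : φ z - φ w - (T - t₁) * fderiv ℝ φ x₀ u ≤ 2 * h - m := by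
        rw [← hℓzw]; linarith
      have h3 : h - ε ≤ m := le_max_right _ _
      nlinarith
    -- monotonicity: fderiv at x vs at w in direction u
    have hmono : t₁ * fderiv ℝ φ x u ≤ t₁ * fderiv ℝ φ w u := by
      have hA := subgrad_aux hΩo hconv hdiff hxΩ hwΩ
      have hB := subgrad_aux hΩo hconv hdiff hwΩ hxΩ
      rw [hwx, map_smul, smul_eq_mul] at hA
      rw [hxw, map_smul, smul_eq_mul] at hB
      nlinarith
    rcases eq_or_lt_of_le ht₁mem.1 with h0 | h0
    · -- t₁ = 0 : w = x
      have hwx' : w = x := by rw [hwdef, ← h0]; simp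
      rw [hwx'] at hstep
      exact arith_aux (h + ε) _ (T - t₁) d (by linarith) hd hdw hstep
    · have hfle : fderiv ℝ φ x u ≤ fderiv ℝ φ w u := le_of_mul_le_mul_left (by linarith) h0
      have := arith_aux (h + ε) (fderiv ℝ φ w u - fderiv ℝ φ x₀ u) (T - t₁) d
        (by linarith) hd hdw hstep
      linarith
  -- from the ε-version to the clean version
  have key' : ∀ u : EuclideanSpace ℝ (Fin n), ‖u‖ = 1 → (fderiv ℝ φ x - fderiv ℝ φ x₀) u ≤ h / d := by
    intro u hu
    rw [ContinuousLinearMap.sub_apply]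
    by_contra hcon
    push_neg at hcon
    set q := fderiv ℝ φ x u - fderiv ℝ φ x₀ u with hq
    have hε : 0 < (q - h / d) * d / 2 := by
      have : 0 < q - h / d := by linarith
      positivity
    have := key u hu ((q - h / d) * d / 2) hε
    rw [show (h + (q - h / d) * d / 2) / d = h / d + (q - h / d) / 2 from by
      field_simp] at this
    linarith
  -- conclude the operator norm bound
  apply ContinuousLinearMap.opNorm_le_bound _ (by positivity)
  intro v
  rcases eq_or_ne v 0 with rfl | hv
  · simp
  · set u := ‖v‖⁻¹ • v with hudef
    have hu1 : ‖u‖ = 1 := norm_smul_inv_norm hv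
    have hvu : v = ‖v‖ • u := by
      rw [hudef, smul_smul, mul_inv_cancel₀ (norm_ne_zero_iff.2 hv), one_smul]
    have h1 : (fderiv ℝ φ x - fderiv ℝ φ x₀) v
        = ‖v‖ * (fderiv ℝ φ x - fderiv ℝ φ x₀) u := by
      conv_lhs => rw [hvu]
      rw [map_smul, smul_eq_mul]
    have h2 : (fderiv ℝ φ x - fderiv ℝ φ x₀) u ≤ h / d := key' u hu1
    have h3 : -(h / d) ≤ (fderiv ℝ φ x - fderiv ℝ φ x₀) u := by
      have := key' (-u) (by rw [norm_neg]; exact hu1)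
      rw [map_neg] at this
      linarith
    rw [Real.norm_eq_abs, h1, abs_mul, abs_norm]
    have : |(fderiv ℝ φ x - fderiv ℝ φ x₀) u| ≤ h / d := abs_le.2 ⟨h3, h2⟩
    calc ‖v‖ * |(fderiv ℝ φ x - fderiv ℝ φ x₀) u| ≤ ‖v‖ * (h / d) := by
          exact mul_le_mul_of_nonneg_left this (norm_nonneg v)
      _ = h / d * ‖v‖ := by ring
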